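/- Let l ∈ ℤ^{d×k} be an integer matrix whose columns l₂, ..., l_k span a full-dimensional cone in ℝ^d (with l₁ = 0), and let v(n) = l·n + b(n) where each entry of b(n) is bounded: |b_{j,i}(n)| ≤ K. Then there exists an integer point p ∈ ℤ^d and N such that for all n ≥ N, p lies in the convex hull of the columns v₁(n), ..., v_k(n), and ‖p − v₁(n)‖ is bounded independent of n. -/

import Mathlib

open Set Finset Pointwise

/-- A nonnegative combination of the `L i` with coefficient sum at most `M`
lies in `M •` the convex hull of the `L i`, provided `L 0 = 0`. -/
lemma aux_mem_smul_hull {d k : ℕ} (L : Fin (k + 1) → Fin d → ℝ) (hL0 : L 0 = 0)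
    (c : Fin (k + 1) → ℝ) (hc : ∀ i, 0 ≤ c i) (M : ℝ) (hM : ∑ i, c i ≤ M) (hM0 : 0 < M) :
    (∑ i, c i • L i) ∈ M • (convexHull ℝ (Set.range L)) := by
  classical
  set w : Fin (k + 1) → ℝ := fun i => c i + if i = 0 then M - ∑ i, c i else 0 with hw
  have hw0 : ∀ i, 0 ≤ w i := by
    intro i; dsimp [w]; split
    · linarith [hc i]
    · simpa using hc i
  have hws : ∑ i, w i = M := by
    simp [w, Finset.sum_add_distrib]
  have hsum : ∑ i, w i • L i = ∑ i, c i • L i := by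
    have : ∀ i, w i • L i = c i • L i + (if i = 0 then M - ∑ i, c i else 0) • L i := by
      intro i; rw [hw]; rw [add_smul]
    simp only [this, Finset.sum_add_distrib]
    have h2 : ∑ i, (if i = 0 then M - ∑ i, c i else 0) • L i = 0 := by
      rw [Finset.sum_eq_single 0]
      · simp [hL0]
      · intro i _ hi; simp [hi]
      · simp
    rw [h2, add_zero]
  have hcm : Finset.univ.centerMass w L ∈ convexHull ℝ (Set.range L) :=
    Finset.centerMass_mem_convexHull _ (fun i _ => hw0 i) (by rw [hws]; exact hM0)
      (fun i _ => Set.mem_range_self i)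
  refine Set.mem_smul_set.2 ⟨_, hcm, ?_⟩
  rw [Finset.centerMass, hws, hsum, smul_smul, mul_inv_cancel₀ (ne_of_gt hM0), one_smul]

/-- Scaling monotonicity for convex sets containing `0`. -/
lemma aux_smul_mono {E : Type*} [AddCommGroup E] [Module ℝ E] {s : Set E}
    (h0 : (0 : E) ∈ s) (hs : Convex ℝ s) {a b : ℝ} (ha : 0 ≤ a) (hab : a ≤ b) :
    a • s ⊆ b • s := by
  rcases eq_or_lt_of_le (ha.trans hab) with hb | hb
  · have haz : a = 0 := le_antisymm (hab.trans hb.symm.le) ha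
    rw [haz, ← hb]
  · intro x hx
    obtain ⟨y, hy, rfl⟩ := Set.mem_smul_set.1 hx
    refine Set.mem_smul_set.2 ⟨(a / b) • y, ?_, ?_⟩
    · have : (a / b) • y = (a / b) • y + (1 - a / b) • 0 := by simp
      rw [this]
      exact hs hy h0 (div_nonneg ha hb.le) (by
        have : a / b ≤ 1 := (div_le_one hb).2 hab
        linarith) (by ring)
    · rw [smul_smul, mul_div_cancel₀ _ (ne_of_gt hb)]

theorem stmt_14 (d k : ℕ) (l : Fin (k + 1) → Fin d → ℤ)
    (hl0 : l 0 = 0)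
    (hfull : (interior {x : Fin d → ℝ | ∃ c : Fin (k + 1) → ℝ,
      (∀ i, 0 ≤ c i) ∧ x = ∑ i, c i • (fun j => (l i j : ℝ))}).Nonempty)
    (b : ℕ → Fin (k + 1) → Fin d → ℝ) (K : ℝ)
    (hb : ∀ n i j, |b n i j| ≤ K)
    (v : ℕ → Fin (k + 1) → Fin d → ℝ)
    (hv : ∀ n i j, v n i j = (n : ℝ) * (l i j : ℝ) + b n i j) :
    ∃ p : Fin d → ℤ, ∃ C : ℝ, ∃ N : ℕ, ∀ n ≥ N,
      (fun j => (p j : ℝ)) ∈ convexHull ℝ (Set.range (v n)) ∧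
      ∀ j, |(p j : ℝ) - v n 0 j| ≤ C := by
  classical
  rcases Nat.eq_zero_or_pos d with hd | hd
  · subst hd
    refine ⟨0, 0, 0, fun n _ => ⟨?_, fun j => j.elim0⟩⟩
    have h0 : (fun j : Fin 0 => (((0 : Fin 0 → ℤ)) j : ℝ)) = v n 0 := by
      funext j; exact j.elim0
    rw [h0]
    exact subset_convexHull ℝ _ ⟨0, rfl⟩
  have hd' : (0 : ℝ) < d := by exact_mod_cast hd
  set L : Fin (k + 1) → Fin d → ℝ := fun i j => (l i j : ℝ) with hLdef
  have hL0 : L 0 = 0 := by funext j; simp [hLdef, hl0]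
  set P := convexHull ℝ (Set.range L) with hPdef
  have hPconv : Convex ℝ P := convex_convexHull ℝ _
  have h0P : (0 : Fin d → ℝ) ∈ P := hL0 ▸ subset_convexHull ℝ _ ⟨0, rfl⟩
  have hK : 0 ≤ K := le_trans (abs_nonneg _) (hb 0 0 ⟨0, hd⟩)
  -- extract an interior ball of the cone
  obtain ⟨x₀, hx₀⟩ := hfull
  rw [mem_interior_iff_mem_nhds, Metric.mem_nhds_iff] at hx₀
  obtain ⟨ε, hε, hball⟩ := hx₀
  have hCone : ∀ x : Fin d → ℝ, dist x x₀ < ε → ∃ c : Fin (k + 1) → ℝ,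
      (∀ i, 0 ≤ c i) ∧ x = ∑ i, c i • L i := fun x hx => hball hx
  -- the 2d cross-polytope points
  set e : Fin d → (Fin d → ℝ) := fun j => Pi.single j (1 : ℝ) with hedef
  have he : ∀ j, ‖e j‖ = 1 := by intro j; rw [hedef]; simp [Pi.norm_single]
  set q : Fin d → Bool → (Fin d → ℝ) :=
    fun j s => x₀ + (if s then ε / 2 else -(ε / 2)) • e j with hqdef
  have hqball : ∀ j s, dist (q j s) x₀ < ε := by
    intro j s
    rw [dist_eq_norm, hqdef]
    simp only [add_sub_cancel_left]
    rw [norm_smul, he j, mul_one, Real.norm_eq_abs]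
    cases s
    · simp only [Bool.false_eq_true, if_false]
      rw [abs_neg, abs_of_pos (half_pos hε)]; linarith
    · simp only [if_true]
      rw [abs_of_pos (half_pos hε)]; linarith
  choose c hc0 hc1 using fun j s => hCone (q j s) (hqball j s)
  set M : ℝ := 1 + ∑ j : Fin d, ∑ s : Bool, ∑ i, c j s i with hMdef
  have hcs_nonneg : ∀ j s, 0 ≤ ∑ i, c j s i :=
    fun j s => Finset.sum_nonneg fun i _ => hc0 j s i
  have hM0 : 0 < M := by
    rw [hMdef]
    have : 0 ≤ ∑ j : Fin d, ∑ s : Bool, ∑ i, c j s i :=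
      Finset.sum_nonneg fun j _ => Finset.sum_nonneg fun s _ => hcs_nonneg j s
    linarith
  have hMbound : ∀ j s, ∑ i, c j s i ≤ M := by
    intro j s
    have h1 : ∑ i, c j s i ≤ ∑ s' : Bool, ∑ i, c j s' i :=
      Finset.single_le_sum (fun s' _ => hcs_nonneg j s') (Finset.mem_univ s)
    have h2 : ∑ s' : Bool, ∑ i, c j s' i ≤ ∑ j' : Fin d, ∑ s' : Bool, ∑ i, c j' s' i :=
      Finset.single_le_sum
        (fun j' _ => Finset.sum_nonneg fun s' _ => hcs_nonneg j' s') (Finset.mem_univ j)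
    rw [hMdef]; linarith
  have hq : ∀ j s, q j s ∈ M • P := by
    intro j s
    rw [hc1 j s, hPdef]
    exact aux_mem_smul_hull L hL0 (c j s) (hc0 j s) M (hMbound j s) hM0
  have hMPconv : Convex ℝ (M • P) := hPconv.smul M
  -- a small ball around x₀ is inside M • P
  set ρ : ℝ := ε / (2 * d) with hρdef
  have hρ : 0 < ρ := by rw [hρdef]; positivity
  have hballM : ∀ y : Fin d → ℝ, ‖y - x₀‖ ≤ ρ → y ∈ M • P := by
    intro y hy
    have hcoord : ∀ j, |y j - x₀ j| ≤ ρ := by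
      intro j
      have := norm_le_pi_norm (y - x₀) j
      simp only [Pi.sub_apply, Real.norm_eq_abs] at this
      linarith
    have key : y = ∑ j : Fin d, (1 / (d : ℝ)) • (x₀ + ((d : ℝ) * (y j - x₀ j)) • e j) := by
      funext j'
      simp only [Finset.sum_apply, Pi.smul_apply, Pi.add_apply, smul_eq_mul, hedef,
        Pi.single_apply]
      rw [Finset.sum_congr rfl (fun j _ => by
        rw [mul_add, mul_ite, mul_one, mul_zero, mul_ite, mul_zero] :
        ∀ j ∈ Finset.univ, _ = 1 / (d:ℝ) * x₀ j' +
          (if j' = j then 1 / (d:ℝ) * ((d:ℝ) * (y j - x₀ j)) else 0))]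
      rw [Finset.sum_add_distrib, Finset.sum_const, Finset.sum_ite_eq Finset.univ j'
        (fun j => 1 / (d:ℝ) * ((d:ℝ) * (y j - x₀ j)))]
      simp only [Finset.card_univ, Fintype.card_fin, Finset.mem_univ, if_true, nsmul_eq_mul]
      field_simp
      ring
    rw [key]
    refine hMPconv.sum_mem (fun j _ => by positivity) ?_ (fun j _ => ?_)
    · rw [Finset.sum_const, Finset.card_univ, Fintype.card_fin, nsmul_eq_mul]
      field_simp
    · -- each point x₀ + s_j • e j lies on the segment [q j false, q j true]
      set s : ℝ := (d : ℝ) * (y j - x₀ j) with hsdef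
      have hs : |s| ≤ ε / 2 := by
        rw [hsdef, abs_mul, abs_of_nonneg hd'.le]
        calc (d : ℝ) * |y j - x₀ j| ≤ (d : ℝ) * ρ :=
              mul_le_mul_of_nonneg_left (hcoord j) hd'.le
          _ = ε / 2 := by rw [hρdef]; field_simp
      set θ : ℝ := (s + ε / 2) / ε with hθdef
      have hθε : θ * ε = s + ε / 2 := by
        rw [hθdef]; field_simp
      have hθ0 : 0 ≤ θ := by
        apply div_nonneg _ hε.le
        have := abs_le.1 hs
        linarith [this.1]
      have hθ1 : θ ≤ 1 := by
        rw [hθdef, div_le_one hε]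
        have := abs_le.1 hs
        linarith [this.2]
      have hseg : x₀ + s • e j = (1 - θ) • q j false + θ • q j true := by
        rw [hqdef]
        simp only [if_true, if_false, Bool.false_eq_true]
        have hs' : s = θ * ε - ε / 2 := by linarith
        rw [hs']
        module
      rw [hseg]
      exact hMPconv (hq j false) (hq j true) (by linarith) hθ0 (by ring)
  -- scale up and round to an integer point
  set t : ℝ := (2 * K + 2) / ρ with htdef
  have ht : 0 < t := by rw [htdef]; positivity
  have htρ : t * ρ = 2 * K + 2 := by rw [htdef]; field_simp
  set p : Fin d → ℤ := fun j => round (t * x₀ j) with hpdef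
  set pv : Fin d → ℝ := fun j => (p j : ℝ) with hpvdef
  have hpv : ‖pv - t • x₀‖ ≤ 1 / 2 := by
    rw [pi_norm_le_iff_of_nonneg (by norm_num)]
    intro j
    simp only [hpvdef, hpdef, Pi.sub_apply, Pi.smul_apply, smul_eq_mul, Real.norm_eq_abs]
    rw [abs_sub_comm]
    exact abs_sub_round (t * x₀ j)
  -- the ball of radius 2K+1 around pv is in (t*M) • P
  have hball2 : ∀ w : Fin d → ℝ, ‖w - pv‖ ≤ 2 * K + 1 → w ∈ (t * M) • P := by
    intro w hw
    have h1 : ‖w - t • x₀‖ ≤ t * ρ := by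
      have := norm_add_le (w - pv) (pv - t • x₀)
      rw [sub_add_sub_cancel] at this
      linarith
    have h2 : t⁻¹ • w ∈ M • P := by
      apply hballM
      have : t⁻¹ • w - x₀ = t⁻¹ • (w - t • x₀) := by
        rw [smul_sub, smul_smul, inv_mul_cancel₀ (ne_of_gt ht), one_smul]
      rw [this, norm_smul, Real.norm_eq_abs, abs_of_pos (inv_pos.2 ht)]
      calc t⁻¹ * ‖w - t • x₀‖ ≤ t⁻¹ * (t * ρ) :=
            mul_le_mul_of_nonneg_left h1 (inv_pos.2 ht).le
        _ = ρ := by field_simp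
    obtain ⟨y, hy, hy2⟩ := Set.mem_smul_set.1 h2
    refine Set.mem_smul_set.2 ⟨y, hy, ?_⟩
    rw [mul_smul, hy2, smul_smul, mul_inv_cancel₀ (ne_of_gt ht), one_smul]
  refine ⟨p, ‖pv‖ + K, ⌈t * M⌉₊, fun n hn => ?_⟩
  have htM : t * M ≤ (n : ℝ) := le_trans (Nat.le_ceil _) (by exact_mod_cast hn)
  have hballn : ∀ w : Fin d → ℝ, ‖w - pv‖ ≤ 2 * K + 1 → w ∈ (n : ℝ) • P :=
    fun w hw => aux_smul_mono h0P hPconv (by positivity) htM (hball2 w hw)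
  constructor
  · by_contra hcontra
    have hconv : Convex ℝ (convexHull ℝ (Set.range (v n))) := convex_convexHull ℝ _
    have hclosed : IsClosed (convexHull ℝ (Set.range (v n))) :=
      (Set.finite_range (v n)).isClosed_convexHull (𝕜 := ℝ)
    obtain ⟨f, u, hfu, hup⟩ := geometric_hahn_banach_closed_point hconv hclosed hcontra
    have hvL : ∀ i, v n i = (n : ℝ) • L i + b n i := by
      intro i; funext j
      simp [hv, hLdef]
    have hbn : ∀ i, ‖b n i‖ ≤ K := by
      intro i
      rw [pi_norm_le_iff_of_nonneg hK]
      intro j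
      simpa [Real.norm_eq_abs] using hb n i j
    have hfL : ∀ i, f ((n : ℝ) • L i) ≤ u + ‖f‖ * K := by
      intro i
      have h1 : f (v n i) < u := hfu _ (subset_convexHull ℝ _ (Set.mem_range_self i))
      have h2 : f ((n : ℝ) • L i) = f (v n i) - f (b n i) := by
        rw [hvL i]; rw [map_add]; ring
      have h3 : |f (b n i)| ≤ ‖f‖ * K := by
        have := f.le_opNorm (b n i)
        rw [Real.norm_eq_abs] at this
        exact this.trans (mul_le_mul_of_nonneg_left (hbn i) (norm_nonneg f))
      have := abs_le.1 h3
      linarith [this.1]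
    have hT : (n : ℝ) • P ⊆ {w : Fin d → ℝ | f w ≤ u + ‖f‖ * K} := by
      have hPeq : (n : ℝ) • P = convexHull ℝ (Set.range fun i => (n : ℝ) • L i) := by
        rw [hPdef, ← convexHull_smul, Set.smul_set_range]
      rw [hPeq]
      apply convexHull_min _ (convex_halfSpace_le ⟨f.map_add, f.map_smul⟩ _)
      rintro _ ⟨i, rfl⟩
      exact hfL i
    have hfp : u < f pv := hup
    have hne : f ≠ 0 := by
      intro h
      have h1 : f (v n 0) < u := hfu _ (subset_convexHull ℝ _ (Set.mem_range_self 0))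
      rw [h] at h1 hfp
      simp at h1 hfp
      linarith
    have hfpos : 0 < ‖f‖ :=
      lt_of_le_of_ne (norm_nonneg f) (fun h => hne (f.opNorm_zero_iff.1 h.symm))
    obtain ⟨z, hz1, hz2⟩ := f.exists_lt_apply_of_lt_opNorm (r := ‖f‖ / 2) (by linarith)
    rw [Real.norm_eq_abs] at hz2
    set z' : Fin d → ℝ := if 0 ≤ f z then z else -z with hz'def
    have hz'1 : ‖z'‖ ≤ 1 := by
      rw [hz'def]; split_ifs
      · linarith
      · rw [norm_neg]; linarith
    have hz'2 : ‖f‖ / 2 < f z' := by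
      rw [hz'def]; split_ifs with h
      · rwa [abs_of_nonneg h] at hz2
      · rw [map_neg]
        rw [abs_of_neg (lt_of_not_ge h)] at hz2
        linarith
    set w : Fin d → ℝ := pv + (2 * K + 1) • z' with hwdef
    have hwmem : w ∈ (n : ℝ) • P := by
      apply hballn
      rw [hwdef, add_sub_cancel_left, norm_smul, Real.norm_eq_abs,
        abs_of_nonneg (by linarith : (0:ℝ) ≤ 2 * K + 1)]
      calc (2 * K + 1) * ‖z'‖ ≤ (2 * K + 1) * 1 :=
            mul_le_mul_of_nonneg_left hz'1 (by linarith)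
        _ = 2 * K + 1 := mul_one _
    have hfw : f w ≤ u + ‖f‖ * K := hT hwmem
    have hfw2 : f w = f pv + (2 * K + 1) * f z' := by
      rw [hwdef, map_add, map_smul, smul_eq_mul]
    have hkey : (2 * K + 1) * (‖f‖ / 2) ≤ (2 * K + 1) * f z' :=
      mul_le_mul_of_nonneg_left hz'2.le (by linarith)
    nlinarith
  · intro j
    have hv0 : v n 0 j = b n 0 j := by
      rw [hv n 0 j, hl0]
      simp
    rw [hv0]
    have h1 : |pv j| ≤ ‖pv‖ := by
      rw [← Real.norm_eq_abs]; exact norm_le_pi_norm pv j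
    have h2 : (p j : ℝ) = pv j := by rw [hpvdef]
    rw [h2]
    calc |pv j - b n 0 j| ≤ |pv j| + |b n 0 j| := abs_sub _ _
      _ ≤ ‖pv‖ + K := add_le_add h1 (hb n 0 j)
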